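/- Let f : ℝⁿ → ℝ be differentiable, x ∈ Ω with S := supp(x) satisfying ∅ ≠ S ≠ {1,…,n}, let T := supp(Bx) and T^c := {1,…,p}∖T, and let G ∈ ℝ^{n×n} be symmetric. Define Π := {y ∈ Ω : B_{T^c·}y = 0, y_{S^c} = 0} and Θ(y) := f(x) + ⟨∇f(x), y − x⟩ + (1/2)⟨y − x, G(y − x)⟩ + δ_Π(y) for y ∈ ℝⁿ; and in dimension m := |S|, define Π̂ := {v ∈ ℝ^m : B_{T^c S} v = 0, l_S ≤ v ≤ u_S} and θ(v) := f(x) + ⟨(∇f(x))_S, v − x_S⟩ + (1/2)⟨v − x_S, G_{SS}(v − x_S)⟩ + δ_{Π̂}(v) for v ∈ ℝ^m. Then for any v̂ ∈ ℝ^m, the vector y ∈ ℝⁿ defined by y_S = v̂ and y_{S^c} = 0 satisfies Θ(y) = θ(v̂) and dist(0, ∂Θ(y)) = dist(0, ∂θ(v̂)). -/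

import Mathlib

open scoped Classical

noncomputable section

/-- The box `Ω = {x : l ≤ x ≤ u}` in ℝⁿ. -/
def Om {n : ℕ} (l u : Fin n → ℝ) : Set (EuclideanSpace ℝ (Fin n)) :=
  {x | ∀ i, l i ≤ x i ∧ x i ≤ u i}

/-- Identity reinterpretation of a coordinate vector as a point of Euclidean space. -/
def toEuc {n : ℕ} (v : Fin n → ℝ) : EuclideanSpace ℝ (Fin n) := WithLp.toLp 2 v

/-- Identity reinterpretation, reduced (subtype-indexed) version. -/
def toEucS {n : ℕ} (S : Finset (Fin n)) (v : {i : Fin n // i ∈ S} → ℝ) :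
    EuclideanSpace ℝ {i : Fin n // i ∈ S} := WithLp.toLp 2 v

/-- `Π = {y ∈ Ω : B_{T^c·}y = 0, y_{S^c} = 0}`. -/
def PiRed {n p : ℕ} (B : Matrix (Fin p) (Fin n) ℝ) (l u : Fin n → ℝ)
    (S : Finset (Fin n)) (T : Finset (Fin p)) : Set (EuclideanSpace ℝ (Fin n)) :=
  {y | y ∈ Om l u ∧ (∀ j ∉ T, B.mulVec y j = 0) ∧ ∀ i ∉ S, y i = 0}

/-- `Π̂ = {v ∈ ℝ^{|S|} : B_{T^c S}v = 0, l_S ≤ v ≤ u_S}`. -/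
def PiHat {n p : ℕ} (B : Matrix (Fin p) (Fin n) ℝ) (l u : Fin n → ℝ)
    (S : Finset (Fin n)) (T : Finset (Fin p)) :
    Set (EuclideanSpace ℝ {i : Fin n // i ∈ S}) :=
  {v | (∀ j ∉ T, (∑ i : {i : Fin n // i ∈ S}, B j i.1 * v i) = 0) ∧
    ∀ i : {i : Fin n // i ∈ S}, l i.1 ≤ v i ∧ v i ≤ u i.1}

/-- The subvector `w_S`. -/
def subVec {n : ℕ} (S : Finset (Fin n)) (w : EuclideanSpace ℝ (Fin n)) :
    EuclideanSpace ℝ {i : Fin n // i ∈ S} := WithLp.toLp 2 (fun i => w i.1)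

/-- The principal submatrix `G_{SS}`. -/
def subMat {n : ℕ} (S : Finset (Fin n)) (G : Matrix (Fin n) (Fin n) ℝ) :
    Matrix {i : Fin n // i ∈ S} {i : Fin n // i ∈ S} ℝ :=
  G.submatrix (fun a => a.1) (fun b => b.1)

/-- `Θ(y) = f(x) + ⟨∇f(x), y−x⟩ + (1/2)⟨y−x, G(y−x)⟩ + δ_Π(y)`. -/
def ThetaRed {n p : ℕ} (B : Matrix (Fin p) (Fin n) ℝ) (l u : Fin n → ℝ)
    (f : EuclideanSpace ℝ (Fin n) → ℝ) (G : Matrix (Fin n) (Fin n) ℝ)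
    (x : EuclideanSpace ℝ (Fin n)) (S : Finset (Fin n)) (T : Finset (Fin p))
    (y : EuclideanSpace ℝ (Fin n)) : EReal :=
  if y ∈ PiRed B l u S T then
    ((f x + (inner ℝ (gradient f x) (y - x) : ℝ)
      + (1 : ℝ) / 2 * (inner ℝ (y - x) (toEuc (G.mulVec (y - x))) : ℝ) : ℝ) : EReal)
  else ⊤

/-- `θ(v) = f(x) + ⟨(∇f(x))_S, v−x_S⟩ + (1/2)⟨v−x_S, G_{SS}(v−x_S)⟩ + δ_{Π̂}(v)`. -/
def thetaHat {n p : ℕ} (B : Matrix (Fin p) (Fin n) ℝ) (l u : Fin n → ℝ)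
    (f : EuclideanSpace ℝ (Fin n) → ℝ) (G : Matrix (Fin n) (Fin n) ℝ)
    (x : EuclideanSpace ℝ (Fin n)) (S : Finset (Fin n)) (T : Finset (Fin p))
    (v : EuclideanSpace ℝ {i : Fin n // i ∈ S}) : EReal :=
  if v ∈ PiHat B l u S T then
    ((f x + (inner ℝ (subVec S (gradient f x)) (v - subVec S x) : ℝ)
      + (1 : ℝ) / 2 *
        (inner ℝ (v - subVec S x) (toEucS S ((subMat S G).mulVec (v - subVec S x))) : ℝ) : ℝ)
      : EReal)
  else ⊤

/-- `∂Θ(y) = ∇f(x) + G(y−x) + N_Π(y)` (empty when `y ∉ Π`). -/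
def subdiffTheta {n p : ℕ} (B : Matrix (Fin p) (Fin n) ℝ) (l u : Fin n → ℝ)
    (f : EuclideanSpace ℝ (Fin n) → ℝ) (G : Matrix (Fin n) (Fin n) ℝ)
    (x : EuclideanSpace ℝ (Fin n)) (S : Finset (Fin n)) (T : Finset (Fin p))
    (y : EuclideanSpace ℝ (Fin n)) : Set (EuclideanSpace ℝ (Fin n)) :=
  {w | y ∈ PiRed B l u S T ∧ ∃ ξ : EuclideanSpace ℝ (Fin n),
    (∀ z ∈ PiRed B l u S T, (inner ℝ ξ (z - y) : ℝ) ≤ 0) ∧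
    w = gradient f x + toEuc (G.mulVec (y - x)) + ξ}

/-- `∂θ(v) = (∇f(x))_S + G_{SS}(v−x_S) + N_{Π̂}(v)` (empty when `v ∉ Π̂`). -/
def subdiffHat {n p : ℕ} (B : Matrix (Fin p) (Fin n) ℝ) (l u : Fin n → ℝ)
    (f : EuclideanSpace ℝ (Fin n) → ℝ) (G : Matrix (Fin n) (Fin n) ℝ)
    (x : EuclideanSpace ℝ (Fin n)) (S : Finset (Fin n)) (T : Finset (Fin p))
    (v : EuclideanSpace ℝ {i : Fin n // i ∈ S}) :
    Set (EuclideanSpace ℝ {i : Fin n // i ∈ S}) :=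
  {w | v ∈ PiHat B l u S T ∧ ∃ ξ : EuclideanSpace ℝ {i : Fin n // i ∈ S},
    (∀ z ∈ PiHat B l u S T, (inner ℝ ξ (z - v) : ℝ) ≤ 0) ∧
    w = subVec S (gradient f x) + toEucS S ((subMat S G).mulVec (v - subVec S x)) + ξ}

lemma le_infDist' {α : Type*} [PseudoMetricSpace α] {s : Set α} (hs : s.Nonempty) {x : α} {b : ℝ}
    (h : ∀ y ∈ s, b ≤ dist x y) : b ≤ Metric.infDist x s := by
  rw [Metric.infDist_eq_iInf]
  haveI : Nonempty s := hs.to_subtype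
  exact le_ciInf fun y => h y y.2

lemma sum_off_zero {n : ℕ} (S : Finset (Fin n)) (F : Fin n → ℝ)
    (hF : ∀ i ∉ S, F i = 0) :
    ∑ i, F i = ∑ i : {i : Fin n // i ∈ S}, F i.1 := by
  rw [Finset.sum_coe_sort S F]
  exact (Finset.sum_subset S.subset_univ (fun i _ hi => hF i hi)).symm

lemma inner_euc {m : Type*} [Fintype m] (a z : EuclideanSpace ℝ m) :
    (inner ℝ a z : ℝ) = ∑ i, a i * z i := by
  simp [PiLp.inner_apply, RCLike.inner_apply, conj_trivial, mul_comm]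

/-- dimension reduction. If `y ∈ ℝⁿ` is obtained from `v̂ ∈ ℝ^{|S|}` by
`y_S = v̂`, `y_{S^c} = 0`, then `Θ(y) = θ(v̂)` and `dist(0, ∂Θ(y)) = dist(0, ∂θ(v̂))`. -/
theorem stmt19 {n p : ℕ} (B : Matrix (Fin p) (Fin n) ℝ)
    (l u : Fin n → ℝ) (hl : ∀ i, l i ≤ 0) (hu : ∀ i, 0 ≤ u i)
    (f : EuclideanSpace ℝ (Fin n) → ℝ) (hf : Differentiable ℝ f)
    (x : EuclideanSpace ℝ (Fin n)) (hx : x ∈ Om l u)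
    (S : Finset (Fin n)) (hS : ∀ i, i ∈ S ↔ x i ≠ 0)
    (hSne : S.Nonempty) (hSneq : S ≠ Finset.univ)
    (T : Finset (Fin p)) (hT : ∀ j, j ∈ T ↔ B.mulVec x j ≠ 0)
    (G : Matrix (Fin n) (Fin n) ℝ) (hGsym : G.IsSymm)
    (vhat : EuclideanSpace ℝ {i : Fin n // i ∈ S})
    (y : EuclideanSpace ℝ (Fin n))
    (hy : ∀ i : Fin n, y i = if h : i ∈ S then vhat ⟨i, h⟩ else 0) :
    ThetaRed B l u f G x S T y = thetaHat B l u f G x S T vhat ∧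
    Metric.infDist (0 : EuclideanSpace ℝ (Fin n)) (subdiffTheta B l u f G x S T y) =
      Metric.infDist (0 : EuclideanSpace ℝ {i : Fin n // i ∈ S})
        (subdiffHat B l u f G x S T vhat) := by

  classical
  -- basic component facts
  have hx0 : ∀ i ∉ S, x i = 0 := fun i hi => by
    by_contra h; exact hi ((hS i).2 h)
  have hy0 : ∀ i ∉ S, y i = 0 := fun i hi => by rw [hy]; exact dif_neg hi
  have hyS : ∀ i : {i : Fin n // i ∈ S}, y i.1 = vhat i := fun i => by
    rw [hy]; exact dif_pos i.2
  have hdz : ∀ i ∉ S, (y - x) i = 0 := fun i hi => by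
    show y i - x i = 0
    rw [hy0 i hi, hx0 i hi, sub_zero]
  have hsv : subVec S (y - x) = vhat - subVec S x := PiLp.ext fun i => by
    show y i.1 - x i.1 = vhat i - x i.1
    rw [hyS i]
  set extS : EuclideanSpace ℝ {i : Fin n // i ∈ S} → EuclideanSpace ℝ (Fin n) :=
    fun w => WithLp.toLp 2 (fun i => if h : i ∈ S then w ⟨i, h⟩ else 0) with hextS
  have hext0 : ∀ (w : EuclideanSpace ℝ {i : Fin n // i ∈ S}) (i : Fin n), i ∉ S → extS w i = 0 :=
    fun w i hi => dif_neg hi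
  have hextP : ∀ (w : EuclideanSpace ℝ {i : Fin n // i ∈ S}) (i : {i : Fin n // i ∈ S}),
      extS w i.1 = w i := fun w i => dif_pos i.2
  have hsum : ∀ (c : Fin n → ℝ) (z : EuclideanSpace ℝ (Fin n)), (∀ i ∉ S, z i = 0) →
      ∑ i, c i * z i = ∑ i : {i : Fin n // i ∈ S}, c i.1 * z i.1 := fun c z hz =>
    sum_off_zero S (fun i => c i * z i) (fun i hi => by show c i * z i = 0; rw [hz i hi, mul_zero])
  have hmulVec : ∀ (z : EuclideanSpace ℝ (Fin n)), (∀ i ∉ S, z i = 0) → ∀ j,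
      B.mulVec z j = ∑ i : {i : Fin n // i ∈ S}, B j i.1 * z i.1 := fun z hz j =>
    hsum (B j) z hz
  have hin : ∀ (ξ z : EuclideanSpace ℝ (Fin n)), (∀ i ∉ S, z i = 0) →
      (inner ℝ ξ z : ℝ) = ∑ i : {i : Fin n // i ∈ S}, ξ i.1 * z i.1 := fun ξ z hz => by
    rw [inner_euc]; exact hsum ξ z hz
  have hGcomp : ∀ (z : EuclideanSpace ℝ (Fin n)), (∀ i ∉ S, z i = 0) →
      ∀ i : {i : Fin n // i ∈ S},
      G.mulVec z i.1 = (subMat S G).mulVec (subVec S z) i := by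
    intro z hz i
    show (∑ j, G i.1 j * z j) = ∑ j : {j : Fin n // j ∈ S}, G i.1 j.1 * z j.1
    exact hsum (G i.1) z hz
  -- correspondences between Π and Π̂
  have hsubPi : ∀ z ∈ PiRed B l u S T, subVec S z ∈ PiHat B l u S T := by
    rintro z ⟨hzO, hzB, hz0⟩
    refine ⟨fun j hj => ?_, fun i => hzO i.1⟩
    have := hzB j hj
    rw [hmulVec z hz0 j] at this
    exact this
  have hextPi : ∀ zh ∈ PiHat B l u S T, extS zh ∈ PiRed B l u S T := by
    rintro zh ⟨hB0, hbox⟩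
    have hz0 : ∀ i ∉ S, extS zh i = 0 := fun i hi => hext0 zh i hi
    refine ⟨fun i => ?_, fun j hj => ?_, hz0⟩
    · by_cases h : i ∈ S
      · have := hbox ⟨i, h⟩
        have he : extS zh i = zh ⟨i, h⟩ := dif_pos h
        rw [he]; exact this
      · rw [hz0 i h]; exact ⟨hl i, hu i⟩
    · rw [hmulVec _ hz0 j]
      calc ∑ i : {i : Fin n // i ∈ S}, B j i.1 * extS zh i.1
          = ∑ i : {i : Fin n // i ∈ S}, B j i.1 * zh i :=
            Finset.sum_congr rfl (fun i _ => by rw [hextP zh i])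
        _ = 0 := hB0 j hj
  have hyv : subVec S y = vhat := PiLp.ext hyS
  have hey : extS vhat = y := PiLp.ext fun i => (hy i).symm
  have hmem : y ∈ PiRed B l u S T ↔ vhat ∈ PiHat B l u S T :=
    ⟨fun h => hyv ▸ hsubPi y h, fun h => hey ▸ hextPi vhat h⟩
  constructor
  · -- value equality
    rw [ThetaRed, thetaHat]
    by_cases hv : vhat ∈ PiHat B l u S T
    · rw [if_pos (hmem.2 hv), if_pos hv]
      have e1 : (inner ℝ (gradient f x) (y - x) : ℝ)
          = inner ℝ (subVec S (gradient f x)) (vhat - subVec S x) := by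
        rw [hin _ _ hdz, inner_euc]
        refine Finset.sum_congr rfl fun i _ => ?_
        show gradient f x i.1 * (y i.1 - x i.1) = gradient f x i.1 * (vhat i - x i.1)
        rw [hyS i]
      have e2 : (inner ℝ (y - x) (toEuc (G.mulVec (y - x))) : ℝ)
          = inner ℝ (vhat - subVec S x)
              (toEucS S ((subMat S G).mulVec (vhat - subVec S x))) := by
        rw [inner_euc, inner_euc]
        rw [sum_off_zero S (fun i => (y - x) i * toEuc (G.mulVec (y - x)) i)
          (fun i hi => by show (y - x) i * toEuc (G.mulVec (y - x)) i = 0; rw [hdz i hi, zero_mul])]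
        refine Finset.sum_congr rfl fun i _ => ?_
        show (y i.1 - x i.1) * (G.mulVec (y - x) i.1)
            = (vhat i - x i.1) * ((subMat S G).mulVec (vhat - subVec S x) i)
        rw [hyS i]; erw [hGcomp (y - x) hdz i, hsv]; rfl
      exact congrArg Real.toEReal (by rw [e1, e2])
    · rw [if_neg (fun h => hv (hmem.1 h)), if_neg hv]
  · -- distance equality
    by_cases hv : vhat ∈ PiHat B l u S T
    · have hyP : y ∈ PiRed B l u S T := hmem.2 hv
      -- norm facts
      have hnorm_ext : ∀ w : EuclideanSpace ℝ {i : Fin n // i ∈ S}, ‖extS w‖ = ‖w‖ := by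
        intro w
        rw [EuclideanSpace.norm_eq, EuclideanSpace.norm_eq]
        congr 1
        rw [sum_off_zero S (fun i => ‖extS w i‖ ^ 2)
          (fun i hi => by show ‖extS w i‖ ^ 2 = 0; rw [hext0 w i hi]; simp)]
        exact Finset.sum_congr rfl fun i _ => by rw [hextP w i]
      have hnorm_sub : ∀ w : EuclideanSpace ℝ (Fin n), ‖subVec S w‖ ≤ ‖w‖ := by
        intro w
        rw [EuclideanSpace.norm_eq, EuclideanSpace.norm_eq]
        apply Real.sqrt_le_sqrt
        calc ∑ i : {i : Fin n // i ∈ S}, ‖subVec S w i‖ ^ 2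
            = ∑ i ∈ S, ‖w i‖ ^ 2 := Finset.sum_coe_sort S (fun i => ‖w i‖ ^ 2)
          _ ≤ ∑ i, ‖w i‖ ^ 2 :=
              Finset.sum_le_sum_of_subset_of_nonneg S.subset_univ
                (fun i _ _ => by positivity)
      -- membership maps
      have hM1 : ∀ w ∈ subdiffTheta B l u f G x S T y,
          subVec S w ∈ subdiffHat B l u f G x S T vhat := by
        rintro w ⟨-, ξ, hξ, rfl⟩
        refine ⟨hv, subVec S ξ, fun zh hzh => ?_, ?_⟩
        · have hz := hextPi zh hzh
          have hd0 : ∀ i ∉ S, (extS zh - y) i = 0 := fun i hi => by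
            show extS zh i - y i = 0
            rw [hext0 zh i hi, hy0 i hi, sub_zero]
          calc (inner ℝ (subVec S ξ) (zh - vhat) : ℝ)
              = ∑ i : {i : Fin n // i ∈ S}, ξ i.1 * (zh i - vhat i) := inner_euc _ _
            _ = ∑ i : {i : Fin n // i ∈ S}, ξ i.1 * ((extS zh - y) i.1) :=
                Finset.sum_congr rfl fun i _ => by
                  show ξ i.1 * (zh i - vhat i) = ξ i.1 * (extS zh i.1 - y i.1)
                  rw [hextP zh i, hyS i]
            _ = inner ℝ ξ (extS zh - y) := (hin ξ _ hd0).symm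
            _ ≤ 0 := hξ _ hz
        · ext i
          show gradient f x i.1 + G.mulVec (y - x) i.1 + ξ i.1
              = gradient f x i.1 + (subMat S G).mulVec (vhat - subVec S x) i + ξ i.1
          erw [hGcomp (y - x) hdz i, hsv]; rfl
      have hM2 : ∀ w ∈ subdiffHat B l u f G x S T vhat,
          extS w ∈ subdiffTheta B l u f G x S T y := by
        rintro w ⟨-, ξh, hξh, rfl⟩
        set a : EuclideanSpace ℝ (Fin n) :=
          gradient f x + toEuc (G.mulVec (y - x)) with ha
        set w' : EuclideanSpace ℝ {i : Fin n // i ∈ S} :=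
          subVec S (gradient f x)
            + toEucS S ((subMat S G).mulVec (vhat - subVec S x)) + ξh with hw'
        refine ⟨hyP, extS w' - a, fun z hz => ?_, by rw [ha]; abel⟩
        have hz0 : ∀ i ∉ S, (z - y) i = 0 := fun i hi => by
          show z i - y i = 0
          rw [hz.2.2 i hi, hy0 i hi, sub_zero]
        rw [hin _ _ hz0]
        have hkey := hξh (subVec S z) (hsubPi z hz)
        rw [inner_euc] at hkey
        calc ∑ i : {i : Fin n // i ∈ S}, (extS w' - a) i.1 * (z - y) i.1
            = ∑ i : {i : Fin n // i ∈ S}, ξh i * (subVec S z i - vhat i) := by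
              refine Finset.sum_congr rfl fun i _ => ?_
              show (extS w' i.1 - (gradient f x i.1 + G.mulVec (y - x) i.1))
                  * (z i.1 - y i.1) = ξh i * (z i.1 - vhat i)
              rw [hextP w' i, hyS i]; erw [hGcomp (y - x) hdz i]; rw [hsv, hw']
              show (gradient f x i.1 + (subMat S G).mulVec (vhat - subVec S x) i + ξh i
                  - (gradient f x i.1 + (subMat S G).mulVec (vhat - subVec S x) i))
                  * (z i.1 - vhat i) = ξh i * (z i.1 - vhat i)
              ring
          _ ≤ 0 := hkey
      -- nonemptiness
      have hAhatNe : (subdiffHat B l u f G x S T vhat).Nonempty := by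
        refine ⟨subVec S (gradient f x)
          + toEucS S ((subMat S G).mulVec (vhat - subVec S x)) + 0, hv, 0,
          fun z hz => ?_, rfl⟩
        rw [inner_euc]
        simp
      obtain ⟨wh0, hwh0⟩ := hAhatNe
      have hANe : (subdiffTheta B l u f G x S T y).Nonempty := ⟨extS wh0, hM2 wh0 hwh0⟩
      refine le_antisymm ?_ ?_
      · refine le_infDist' ⟨wh0, hwh0⟩ fun wh hwh => ?_
        calc Metric.infDist 0 (subdiffTheta B l u f G x S T y)
            ≤ dist 0 (extS wh) := Metric.infDist_le_dist_of_mem (hM2 wh hwh)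
          _ = dist 0 wh := by rw [dist_zero_left, dist_zero_left, hnorm_ext]
      · refine le_infDist' hANe fun w hw => ?_
        calc Metric.infDist 0 (subdiffHat B l u f G x S T vhat)
            ≤ dist 0 (subVec S w) := Metric.infDist_le_dist_of_mem (hM1 w hw)
          _ ≤ dist 0 w := by rw [dist_zero_left, dist_zero_left]; exact hnorm_sub w
    · have hA : subdiffTheta B l u f G x S T y = ∅ :=
        Set.eq_empty_of_forall_notMem fun w hw => hv (hmem.1 hw.1)
      have hB : subdiffHat B l u f G x S T vhat = ∅ :=
        Set.eq_empty_of_forall_notMem fun w hw => hv hw.1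
      rw [hA, hB, Metric.infDist_empty, Metric.infDist_empty]


end
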